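/- Let G be a finite directed graph, r a vertex of G, and T and T' two r-directed trees in G with |A(T)| = |A(T')| = k. Call an arc e of T fixed (with respect to T') if the directed path in T from r to the head of e is contained in T', and unfixed otherwise. If h is the number of unfixed arcs of T, then there exists a reconfiguration sequence from T to T' of length at most h in which every intermediate subgraph is an r-directed tree in G with k arcs. -/

import Mathlib

/-- The vertex set of a set of arcs. -/
def arcVerts {V : Type*} [DecidableEq V] (T : Finset (V × V)) : Finset V :=
  T.image Prod.fst ∪ T.image Prod.snd

/-- The in-degree of a vertex `v` in a set of arcs `T`. -/
def inDeg {V : Type*} [DecidableEq V] (T : Finset (V × V)) (v : V) : ℕ :=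
  (T.filter fun e => e.2 = v).card

/-- The step relation of a set of arcs: `arcRel T a b` iff `(a, b)` is an arc of `T`. -/
def arcRel {V : Type*} (T : Finset (V × V)) : V → V → Prop := fun a b => (a, b) ∈ T

/-- `T` is (the arc set of) a directed tree rooted at `r`: the root has in-degree `0`,
every other vertex has in-degree exactly `1`, and every vertex is reachable from `r`. -/
def IsDirTree {V : Type*} [DecidableEq V] (T : Finset (V × V)) (r : V) : Prop :=
  inDeg T r = 0 ∧ (∀ v ∈ arcVerts T, v ≠ r → inDeg T v = 1) ∧
    ∀ v ∈ arcVerts T, Relation.ReflTransGen (arcRel T) r v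

/-- An arc `e` of the `r`-directed tree `T` is fixed with respect to `T'` if the
directed path in `T` from the root to the head of `e` is contained in `T'`.
In an `r`-directed tree, the arcs of the path from `r` to the head of `e` are exactly
the arcs `f ∈ T` from whose head the head of `e` is reachable in `T`. -/
def FixedArc {V : Type*} (T T' : Finset (V × V)) (e : V × V) : Prop :=
  ∀ f ∈ T, Relation.ReflTransGen (arcRel T) f.2 e.2 → f ∈ T'

/-- The number of arcs of `T` that are unfixed with respect to `T'`. -/
noncomputable def unfixedCount {V : Type*} (T T' : Finset (V × V)) : ℕ :=
  {e | e ∈ T ∧ ¬ FixedArc T T' e}.ncard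


set_option linter.unusedSectionVars false

section Helpers

open Relation Finset

variable {V : Type*} [DecidableEq V]

/-- paths of length `n`. -/
def relPow (R : V → V → Prop) : ℕ → V → V → Prop
  | 0, a, b => a = b
  | n+1, a, b => ∃ c, relPow R n a c ∧ R c b

lemma reflTransGen_iff_relPow {R : V → V → Prop} {a b : V} :
    Relation.ReflTransGen R a b ↔ ∃ n, relPow R n a b := by
  constructor
  · intro h
    induction h with
    | refl => exact ⟨0, rfl⟩
    | tail _ h2 ih => obtain ⟨n, hn⟩ := ih; exact ⟨n+1, _, hn, h2⟩
  · rintro ⟨n, hn⟩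
    induction n generalizing b with
    | zero => cases hn; exact .refl
    | succ n ih => obtain ⟨c, hc, hcb⟩ := hn; exact (ih hc).tail hcb

lemma mem_arcVerts_fst {s : Finset (V × V)} {e : V × V} (he : e ∈ s) :
    e.1 ∈ arcVerts s := by
  exact Finset.mem_union.2 (Or.inl (Finset.mem_image.2 ⟨e, he, rfl⟩))

lemma mem_arcVerts_snd {s : Finset (V × V)} {e : V × V} (he : e ∈ s) :
    e.2 ∈ arcVerts s := by
  exact Finset.mem_union.2 (Or.inr (Finset.mem_image.2 ⟨e, he, rfl⟩))

lemma mem_arcVerts_iff {s : Finset (V × V)} {x : V} :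
    x ∈ arcVerts s ↔ ∃ e ∈ s, x = e.1 ∨ x = e.2 := by
  simp only [arcVerts, Finset.mem_union, Finset.mem_image]
  constructor
  · rintro (⟨e, he, rfl⟩ | ⟨e, he, rfl⟩)
    · exact ⟨e, he, Or.inl rfl⟩
    · exact ⟨e, he, Or.inr rfl⟩
  · rintro ⟨e, he, rfl | rfl⟩
    · exact Or.inl ⟨e, he, rfl⟩
    · exact Or.inr ⟨e, he, rfl⟩

variable {T : Finset (V × V)} {r : V}

lemma not_head_root (hT : IsDirTree T r) {e : V × V} (he : e ∈ T) : e.2 ≠ r := by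
  intro h
  have : e ∈ T.filter fun f => f.2 = r := Finset.mem_filter.2 ⟨he, h⟩
  have h0 := hT.1
  simp only [inDeg, Finset.card_eq_zero] at h0
  rw [h0] at this
  exact absurd this (Finset.notMem_empty _)

/-- uniqueness of in-arcs. -/
lemma head_eq (hT : IsDirTree T r) {e f : V × V} (he : e ∈ T) (hf : f ∈ T)
    (h : e.2 = f.2) : e = f := by
  have hne : e.2 ≠ r := not_head_root hT he
  have hmem : e.2 ∈ arcVerts T := mem_arcVerts_snd he
  have h1 : inDeg T e.2 = 1 := hT.2.1 _ hmem hne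
  have hcard : (T.filter fun g => g.2 = e.2).card ≤ 1 := le_of_eq h1
  exact Finset.card_le_one.1 hcard e (Finset.mem_filter.2 ⟨he, rfl⟩)
    f (Finset.mem_filter.2 ⟨hf, h.symm⟩)

lemma exists_in_arc {a b : V} (h : Relation.ReflTransGen (arcRel T) a b) (hab : a ≠ b) :
    ∃ c, (c, b) ∈ T ∧ Relation.ReflTransGen (arcRel T) a c := by
  rcases h.cases_tail with h | ⟨c, hc, hcb⟩
  · exact absurd h.symm hab
  · exact ⟨c, hcb, hc⟩

lemma not_reach_root (hT : IsDirTree T r) {e : V × V} (he : e ∈ T)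
    (h : Relation.ReflTransGen (arcRel T) e.2 r) : False := by
  by_cases hr : e.2 = r
  · exact not_head_root hT he hr
  · obtain ⟨c, hc, -⟩ := exists_in_arc h hr
    exact not_head_root hT hc rfl

/-- depth of a vertex. -/
noncomputable def dep (R : V → V → Prop) (r x : V) : ℕ :=
  letI := Classical.dec
  if h : ∃ n, relPow R n r x then Nat.find h else 0

lemma dep_succ (hT : IsDirTree T r) {a b : V} (hab : (a, b) ∈ T)
    (hra : Relation.ReflTransGen (arcRel T) r a) :
    dep (arcRel T) r a + 1 ≤ dep (arcRel T) r b := by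
  classical
  have hrb : Relation.ReflTransGen (arcRel T) r b := hra.tail hab
  obtain ⟨na, hna⟩ := reflTransGen_iff_relPow.1 hra
  obtain ⟨nb, hnb⟩ := reflTransGen_iff_relPow.1 hrb
  have hea : ∃ n, relPow (arcRel T) n r a := ⟨na, hna⟩
  have heb : ∃ n, relPow (arcRel T) n r b := ⟨nb, hnb⟩
  rw [dep, dep]
  rw [dif_pos hea, dif_pos heb]
  have hspec := Nat.find_spec heb
  rcases hm : Nat.find heb with - | m
  · rw [hm] at hspec
    have : r = b := hspec
    exact absurd this.symm (not_head_root hT hab)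
  · rw [hm] at hspec
    obtain ⟨c, hc, hcb⟩ := hspec
    have hcab : (c, b) = (a, b) := head_eq hT hcb hab rfl
    have hca : c = a := (Prod.ext_iff.1 hcab).1
    subst hca
    have : Nat.find hea ≤ m := Nat.find_le hc
    omega

lemma dep_mono (hT : IsDirTree T r) {a b : V}
    (h : Relation.ReflTransGen (arcRel T) a b)
    (hra : Relation.ReflTransGen (arcRel T) r a) :
    dep (arcRel T) r a ≤ dep (arcRel T) r b := by
  induction h with
  | refl => exact le_rfl
  | tail h1 h2 ih =>
      have := dep_succ hT h2 (hra.trans h1)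
      omega

lemma inDeg_insert_ne {s : Finset (V × V)} {e : V × V} {x : V} (h : e.2 ≠ x) :
    inDeg (insert e s) x = inDeg s x := by
  unfold inDeg
  rw [Finset.filter_insert, if_neg h]

lemma inDeg_erase_ne {s : Finset (V × V)} {e : V × V} {x : V} (h : e.2 ≠ x) :
    inDeg (s.erase e) x = inDeg s x := by
  unfold inDeg
  rw [Finset.filter_erase, Finset.erase_eq_of_notMem]
  intro hmem
  exact h (Finset.mem_filter.1 hmem).2

end Helpers


section Core

open Relation Finset

variable {V : Type*} [DecidableEq V] {T T' : Finset (V × V)} {r : V}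

/-- If all `T'`-ancestor arcs of `x` lie in `T`, then all `T`-ancestor arcs of `x`
lie in `T'` (they coincide with the `T'`-path from `r` to `x`). -/
lemma claimF (hT : IsDirTree T r) (hT' : IsDirTree T' r) :
    ∀ x, Relation.ReflTransGen (arcRel T') r x →
      (∀ h ∈ T', Relation.ReflTransGen (arcRel T') h.2 x → h ∈ T) →
      ∀ f ∈ T, Relation.ReflTransGen (arcRel T) f.2 x → f ∈ T' := by
  intro x hrx
  induction hrx with
  | refl =>
      intro _ f hf hfr
      exact (not_reach_root hT hf hfr).elim
  | @tail y x h1 h2 ih =>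
      intro hcl f hf hfx
      have hyxT : (y, x) ∈ T := hcl (y, x) h2 .refl
      rcases hfx.cases_tail with heq | ⟨c, hc, hcx⟩
      · have hfe : f = (y, x) := head_eq hT hf hyxT heq.symm
        exact hfe ▸ h2
      · have hce : ((c, x) : V × V) = (y, x) := head_eq hT hcx hyxT rfl
        have hcy : c = y := (Prod.ext_iff.1 hce).1
        exact ih (fun h hh hr => hcl h hh (hr.tail h2)) f hf (hcy ▸ hc)

lemma pres_aux {g e' : V × V} {t : V}
    (hnv : ¬ Relation.ReflTransGen (arcRel T) e'.2 t) :
    ∀ x b, Relation.ReflTransGen (arcRel (insert e' (T.erase g))) x b →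
      Relation.ReflTransGen (arcRel T) b t → Relation.ReflTransGen (arcRel T) x t := by
  intro x b h
  induction h with
  | refl => exact id
  | @tail c b' h1 h2 ih =>
      intro hbt
      rcases Finset.mem_insert.1 h2 with heq | hmem
      · have hb' : b' = e'.2 := congrArg Prod.snd heq
        exact absurd (hb' ▸ hbt) hnv
      · exact ih (Relation.ReflTransGen.head (Finset.mem_of_mem_erase hmem) hbt)

/-- Preservation of fixedness under the swap. -/
lemma pres {g e' : V × V} {t : V} (he' : e' ∈ T')
    (hnv : ¬ Relation.ReflTransGen (arcRel T) e'.2 t)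
    (Ht : ∀ f ∈ T, Relation.ReflTransGen (arcRel T) f.2 t → f ∈ T') :
    ∀ f ∈ insert e' (T.erase g),
      Relation.ReflTransGen (arcRel (insert e' (T.erase g))) f.2 t → f ∈ T' := by
  intro f hf hft
  rcases Finset.mem_insert.1 hf with rfl | hmem
  · exact he'
  · exact Ht f (Finset.mem_of_mem_erase hmem) (pres_aux hnv f.2 t hft .refl)

/-- Reachability of vertices on the `T'`-path to `u` inside the swapped tree. -/
lemma reach_u {g e' : V × V} {u : V} (hT : IsDirTree T r) (hT' : IsDirTree T' r)
    (hg : g ∈ T) (hgunfix : ¬ FixedArc T T' g)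
    (hclU : ∀ h ∈ T', Relation.ReflTransGen (arcRel T') h.2 u → h ∈ T) :
    ∀ x, Relation.ReflTransGen (arcRel T') r x →
      Relation.ReflTransGen (arcRel T') x u →
      Relation.ReflTransGen (arcRel (insert e' (T.erase g))) r x := by
  intro x hrx
  induction hrx with
  | refl => intro _; exact .refl
  | @tail y x h1 h2 ih =>
      intro hxu
      have hyu : Relation.ReflTransGen (arcRel T') y u := Relation.ReflTransGen.head h2 hxu
      have hy1 := ih hyu
      have hyxT : (y, x) ∈ T := hclU (y, x) h2 hxu
      have hne : (y, x) ≠ g := by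
        intro hgeq
        apply hgunfix
        intro f hf hfr
        rw [← hgeq] at hfr
        exact claimF hT hT' x (h1.tail h2)
          (fun h hh hr => hclU h hh (hr.trans hxu)) f hf hfr
      exact hy1.tail (show arcRel _ y x from
        Finset.mem_insert_of_mem (Finset.mem_erase.2 ⟨hne, hyxT⟩))

/-- Reachability in the swapped tree of all old vertices except possibly `g.2`. -/
lemma reach_all {g e' : V × V} {v : V} (hT : IsDirTree T r)
    (hv1 : Relation.ReflTransGen (arcRel (insert e' (T.erase g))) r v)
    (hcase : g.2 = v ∨ ∀ c, (g.2, c) ∉ T) :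
    ∀ x, Relation.ReflTransGen (arcRel T) r x →
      x = g.2 ∨ Relation.ReflTransGen (arcRel (insert e' (T.erase g))) r x := by
  intro x hx
  induction hx with
  | refl => exact Or.inr .refl
  | @tail y x h1 h2 ih =>
      have hy1 : Relation.ReflTransGen (arcRel (insert e' (T.erase g))) r y := by
        rcases ih with hyg | h
        · rcases hcase with hgv | hleaf
          · rw [hyg, hgv]; exact hv1
          · exact absurd (show ((g.2, x) : V × V) ∈ T from hyg ▸ h2) (hleaf x)
        · exact h
      by_cases hgx : ((y, x) : V × V) = g
      · exact Or.inl (congrArg Prod.snd hgx)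
      · exact Or.inr (hy1.tail (show arcRel _ y x from
          Finset.mem_insert_of_mem (Finset.mem_erase.2 ⟨hgx, h2⟩)))

end Core


section Step

open Relation Finset

variable {V : Type*} [DecidableEq V]

lemma step {T T' : Finset (V × V)} {r : V} (hT : IsDirTree T r) (hT' : IsDirTree T' r)
    (hcard : T.card = T'.card) (hne : T ≠ T') :
    ∃ T₁ : Finset (V × V), T₁ ⊆ T ∪ T' ∧ IsDirTree T₁ r ∧ T₁.card = T.card ∧
      (T \ T₁).card = 1 ∧ (T₁ \ T).card = 1 ∧
      unfixedCount T₁ T' < unfixedCount T T' := by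
  classical
  -- nonemptiness of the two differences
  have hTT' : (T' \ T).Nonempty := by
    rw [Finset.sdiff_nonempty]
    intro hsub
    exact hne (Finset.eq_of_subset_of_card_le hsub (le_of_eq hcard)).symm
  have hT'T : (T \ T').Nonempty := by
    rw [Finset.sdiff_nonempty]
    intro hsub
    exact hne (Finset.eq_of_subset_of_card_le hsub (le_of_eq hcard.symm))
  -- choose the minimum-depth arc of T' \ T
  obtain ⟨⟨u, v⟩, he', hmin⟩ :=
    Finset.exists_min_image (T' \ T) (fun e => dep (arcRel T') r e.2) hTT'
  have huvT' : (u, v) ∈ T' := (Finset.mem_sdiff.1 he').1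
  have huvT : (u, v) ∉ T := (Finset.mem_sdiff.1 he').2
  have hru' : Relation.ReflTransGen (arcRel T') r u :=
    hT'.2.2 u (mem_arcVerts_fst huvT')
  have hvr : v ≠ r := not_head_root hT' huvT'
  -- closure at u: all T'-ancestor arcs of u are in T
  have hclU : ∀ h ∈ T', Relation.ReflTransGen (arcRel T') h.2 u → h ∈ T := by
    intro h hh hr
    by_contra hhT
    have h1 := hmin h (Finset.mem_sdiff.2 ⟨hh, hhT⟩)
    have h2 : dep (arcRel T') r h.2 ≤ dep (arcRel T') r u :=
      dep_mono hT' hr (hT'.2.2 _ (mem_arcVerts_snd hh))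
    have h3 := dep_succ hT' huvT' hru'
    simp only at h1 h2 h3
    omega
  have hclaimFU : ∀ f ∈ T, Relation.ReflTransGen (arcRel T) f.2 u → f ∈ T' :=
    claimF hT hT' u hru' hclU
  have hu_mem : u = r ∨ u ∈ arcVerts T := by
    by_cases h : u = r
    · exact Or.inl h
    · obtain ⟨c, hc, -⟩ := exists_in_arc hru' (Ne.symm h)
      exact Or.inr (mem_arcVerts_snd (hclU (c, u) hc .refl))
  -- choose the arc g to remove
  have hcore : ∃ g : V × V, g ∈ T ∧ ¬ FixedArc T T' g ∧
      ((g.2 = v ∧ g ∉ T') ∨ (v ∉ arcVerts T ∧ g.2 ≠ u ∧ ∀ c, (g.2, c) ∉ T)) := by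
    by_cases hva : v ∈ arcVerts T
    · -- Case A: v already has an in-arc in T; remove it
      have h1 : inDeg T v = 1 := hT.2.1 v hva hvr
      rw [inDeg, Finset.card_eq_one] at h1
      obtain ⟨a, ha⟩ := h1
      have hamem : a ∈ T.filter fun e => e.2 = v := ha ▸ Finset.mem_singleton_self a
      have haT : a ∈ T := (Finset.mem_filter.1 hamem).1
      have hav : a.2 = v := (Finset.mem_filter.1 hamem).2
      have haT' : a ∉ T' := by
        intro haT'
        have : a = (u, v) := head_eq hT' haT' huvT' hav
        exact huvT (this ▸ haT)
      exact ⟨a, haT, fun hfix => haT' (hfix a haT .refl), Or.inl ⟨hav, haT'⟩⟩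
    · -- Case B: remove a deepest unfixed arc (a leaf arc)
      set UF := T.filter (fun e => ¬ FixedArc T T' e) with hUF
      have hUFne : UF.Nonempty := by
        obtain ⟨e₀, he₀⟩ := hT'T
        have he₀T : e₀ ∈ T := (Finset.mem_sdiff.1 he₀).1
        have he₀T' : e₀ ∉ T' := (Finset.mem_sdiff.1 he₀).2
        exact ⟨e₀, Finset.mem_filter.2 ⟨he₀T, fun hfix => he₀T' (hfix e₀ he₀T .refl)⟩⟩
      obtain ⟨g, hgUF, hgmax⟩ :=
        Finset.exists_max_image UF (fun e => dep (arcRel T) r e.2) hUFne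
      have hg : g ∈ T := (Finset.mem_filter.1 hgUF).1
      have hgunfix : ¬ FixedArc T T' g := (Finset.mem_filter.1 hgUF).2
      have hleaf : ∀ c, (g.2, c) ∉ T := by
        intro c hc
        have hwit : ∃ f ∈ T, Relation.ReflTransGen (arcRel T) f.2 g.2 ∧ f ∉ T' := by
          by_contra hcon
          push_neg at hcon
          exact hgunfix (fun f hf hr => hcon f hf hr)
        obtain ⟨f0, hf0, hrf, hf0T'⟩ := hwit
        have hcUF : ((g.2, c) : V × V) ∈ UF :=
          Finset.mem_filter.2 ⟨hc, fun hfix => hf0T' (hfix f0 hf0 (hrf.tail hc))⟩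
        have h1 := hgmax _ hcUF
        have h2 := dep_succ hT hc (hT.2.2 g.2 (mem_arcVerts_snd hg))
        simp only at h1 h2
        omega
      have hgu : g.2 ≠ u := by
        intro h
        exact hgunfix (fun f hf hr => hclaimFU f hf (h ▸ hr))
      exact ⟨g, hg, hgunfix, Or.inr ⟨hva, hgu, hleaf⟩⟩
  obtain ⟨g, hg, hgunfix, hAB⟩ := hcore
  set T₁ := insert ((u, v) : V × V) (T.erase g) with hT₁def
  have huvT₁ : ((u, v) : V × V) ∈ T₁ := Finset.mem_insert_self _ _
  have hT₁sub : T₁ ⊆ T ∪ T' := by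
    intro f hf
    rcases Finset.mem_insert.1 hf with rfl | hf'
    · exact Finset.mem_union_right _ huvT'
    · exact Finset.mem_union_left _ (Finset.mem_of_mem_erase hf')
  -- side condition for preservation
  have hnv_gen : ∀ t : V, (t = r ∨ t ∈ arcVerts T) →
      (∀ f ∈ T, Relation.ReflTransGen (arcRel T) f.2 t → f ∈ T') →
      ¬ Relation.ReflTransGen (arcRel T) v t := by
    intro t ht Ht hvt
    rcases hAB with ⟨hgv, hgT'⟩ | ⟨hvn, -, -⟩
    · exact hgT' (Ht g hg (hgv ▸ hvt))
    · rcases hvt.cases_head with heq | ⟨c, hc, -⟩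
      · rcases ht with rfl | hmem
        · exact hvr heq
        · exact hvn (heq ▸ hmem)
      · exact hvn (mem_arcVerts_fst hc)
  -- uniqueness of the in-arc of v in T₁
  have huniqv : ∀ f ∈ T₁, f.2 = v → f = (u, v) := by
    intro f hf hfv
    rcases Finset.mem_insert.1 hf with rfl | hf'
    · rfl
    · exfalso
      have hfT : f ∈ T := Finset.mem_of_mem_erase hf'
      rcases hAB with ⟨hgv, -⟩ | ⟨hvn, -, -⟩
      · exact (Finset.mem_erase.1 hf').1 (head_eq hT hfT hg (hfv.trans hgv.symm))
      · exact hvn (hfv ▸ mem_arcVerts_snd hfT)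
  -- g.2 is either v or not a vertex of T₁
  have hAB' : g.2 = v ∨ g.2 ∉ arcVerts T₁ := by
    rcases hAB with ⟨hgv, -⟩ | ⟨hvn, hgu, hleaf⟩
    · exact Or.inl hgv
    · right
      intro hmem
      rcases mem_arcVerts_iff.1 hmem with ⟨e, he, heq⟩
      rcases Finset.mem_insert.1 he with rfl | heT
      · rcases heq with h | h
        · have h' : g.2 = u := h
          exact hgu h'
        · have h' : g.2 = v := h
          exact hvn (h' ▸ mem_arcVerts_snd hg)
      · have heT2 : e ∈ T := Finset.mem_of_mem_erase heT
        rcases heq with h | h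
        · exact hleaf e.2 (show ((g.2, e.2) : V × V) ∈ T by rw [h]; simpa using heT2)
        · exact (Finset.mem_erase.1 heT).1 (head_eq hT heT2 hg h.symm)
  -- reachability
  have hrTu : Relation.ReflTransGen (arcRel T₁) r u :=
    reach_u hT hT' hg hgunfix hclU u hru' .refl
  have hrTv : Relation.ReflTransGen (arcRel T₁) r v :=
    hrTu.tail (show arcRel T₁ u v from huvT₁)
  have hcase : g.2 = v ∨ ∀ c, (g.2, c) ∉ T := by
    rcases hAB with ⟨hgv, -⟩ | ⟨-, -, hleaf⟩
    · exact Or.inl hgv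
    · exact Or.inr hleaf
  have hreachT : ∀ x, Relation.ReflTransGen (arcRel T) r x →
      x = g.2 ∨ Relation.ReflTransGen (arcRel T₁) r x := reach_all hT hrTv hcase
  -- T₁ is a directed tree
  have hDT : IsDirTree T₁ r := by
    refine ⟨?_, ?_, ?_⟩
    · rw [hT₁def, inDeg_insert_ne (show ((u,v) : V × V).2 ≠ r from hvr),
        inDeg_erase_ne (not_head_root hT hg)]
      exact hT.1
    · intro x hx hxr
      by_cases hxv : x = v
      · subst hxv
        have hfil : T₁.filter (fun f => f.2 = x) = {(u, x)} := by
          apply Finset.eq_singleton_iff_unique_mem.2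
          exact ⟨Finset.mem_filter.2 ⟨huvT₁, rfl⟩,
            fun f hf => huniqv f (Finset.mem_filter.1 hf).1 (Finset.mem_filter.1 hf).2⟩
        rw [inDeg, hfil, Finset.card_singleton]
      · have hxT : x ∈ arcVerts T := by
          rcases mem_arcVerts_iff.1 hx with ⟨e, he, heq⟩
          rcases Finset.mem_insert.1 he with rfl | heT
          · rcases heq with h | h
            · subst h
              rcases hu_mem with h' | h'
              · exact absurd h' hxr
              · exact h'
            · exact absurd h hxv
          · have heT2 : e ∈ T := Finset.mem_of_mem_erase heT
            rcases heq with h | h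
            · exact h ▸ mem_arcVerts_fst heT2
            · exact h ▸ mem_arcVerts_snd heT2
        have hg2x : g.2 ≠ x := by
          rcases hAB' with hgv | hgn
          · rw [hgv]; exact fun h => hxv h.symm
          · intro h; exact hgn (h ▸ hx)
        rw [hT₁def, inDeg_insert_ne (show ((u,v) : V × V).2 ≠ x from fun h => hxv h.symm),
          inDeg_erase_ne hg2x]
        exact hT.2.1 x hxT hxr
    · intro x hx
      rcases mem_arcVerts_iff.1 hx with ⟨e, he, heq⟩
      rcases Finset.mem_insert.1 he with rfl | heT
      · rcases heq with h | h
        · exact h ▸ hrTu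
        · exact h ▸ hrTv
      · have heT2 : e ∈ T := Finset.mem_of_mem_erase heT
        have hxT : x ∈ arcVerts T := by
          rcases heq with h | h
          · exact h ▸ mem_arcVerts_fst heT2
          · exact h ▸ mem_arcVerts_snd heT2
        rcases hreachT x (hT.2.2 x hxT) with hxg | h
        · rcases hAB' with hgv | hgn
          · rw [hxg, hgv]; exact hrTv
          · exact absurd (hxg ▸ hx) hgn
        · exact h
  -- cardinality
  have huvE : ((u, v) : V × V) ∉ T.erase g := fun h => huvT (Finset.mem_of_mem_erase h)
  have hTpos : 0 < T.card := Finset.card_pos.2 ⟨g, hg⟩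
  have hcardT₁ : T₁.card = T.card := by
    rw [hT₁def, Finset.card_insert_of_notMem huvE, Finset.card_erase_of_mem hg]
    omega
  -- differences
  have hdiff1 : T \ T₁ = {g} := by
    ext f
    simp only [Finset.mem_sdiff, Finset.mem_singleton]
    constructor
    · rintro ⟨hfT, hfT₁⟩
      by_contra hfg
      exact hfT₁ (Finset.mem_insert_of_mem (Finset.mem_erase.2 ⟨hfg, hfT⟩))
    · rintro rfl
      refine ⟨hg, fun hmem => ?_⟩
      rcases Finset.mem_insert.1 hmem with heq | hmem'
      · exact huvT (heq ▸ hg)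
      · exact (Finset.mem_erase.1 hmem').1 rfl
  have hdiff2 : T₁ \ T = {(u, v)} := by
    ext f
    simp only [Finset.mem_sdiff, Finset.mem_singleton]
    constructor
    · rintro ⟨hfT₁, hfT⟩
      rcases Finset.mem_insert.1 hfT₁ with heq | hmem'
      · exact heq
      · exact absurd (Finset.mem_of_mem_erase hmem') hfT
    · rintro rfl
      exact ⟨huvT₁, huvT⟩
  -- fixedness of the new arc
  have hnvu : ¬ Relation.ReflTransGen (arcRel T) v u := hnv_gen u hu_mem hclaimFU
  have hpresU : ∀ f ∈ T₁, Relation.ReflTransGen (arcRel T₁) f.2 u → f ∈ T' :=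
    pres huvT' hnvu hclaimFU
  have hfixuv : FixedArc T₁ T' (u, v) := by
    intro f hf hfr
    rcases hfr.cases_tail with heq | ⟨c, hc, hcv⟩
    · exact (huniqv f hf heq.symm) ▸ huvT'
    · have hce : ((c, v) : V × V) = (u, v) := huniqv (c, v) hcv rfl
      have hcu : c = u := (Prod.ext_iff.1 hce).1
      exact hpresU f hf (hcu ▸ hc)
  -- every unfixed arc of T₁ is an unfixed arc of T other than g
  have hkey : ∀ f ∈ T₁, ¬ FixedArc T₁ T' f → f ∈ T ∧ ¬ FixedArc T T' f ∧ f ≠ g := by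
    intro f hf hnf
    rcases Finset.mem_insert.1 hf with rfl | hf'
    · exact absurd hfixuv hnf
    · have hfT : f ∈ T := Finset.mem_of_mem_erase hf'
      refine ⟨hfT, fun hfix => hnf ?_, (Finset.mem_erase.1 hf').1⟩
      exact pres huvT' (hnv_gen f.2 (Or.inr (mem_arcVerts_snd hfT)) hfix) hfix
  -- counting
  have hSfin : {e | e ∈ T ∧ ¬ FixedArc T T' e}.Finite :=
    Set.Finite.subset T.finite_toSet (fun e he => he.1)
  have hgS : g ∈ {e | e ∈ T ∧ ¬ FixedArc T T' e} := ⟨hg, hgunfix⟩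
  have hsubset : {e | e ∈ T₁ ∧ ¬ FixedArc T₁ T' e} ⊆
      {e | e ∈ T ∧ ¬ FixedArc T T' e} \ {g} := by
    rintro e ⟨he, hne'⟩
    obtain ⟨h1, h2, h3⟩ := hkey e he hne'
    exact ⟨⟨h1, h2⟩, h3⟩
  have hlt : unfixedCount T₁ T' < unfixedCount T T' := by
    calc unfixedCount T₁ T' ≤ ({e | e ∈ T ∧ ¬ FixedArc T T' e} \ {g}).ncard :=
          Set.ncard_le_ncard hsubset hSfin.diff
      _ < unfixedCount T T' := Set.ncard_diff_singleton_lt_of_mem hgS hSfin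
  exact ⟨T₁, hT₁sub, hDT, hcardT₁, hdiff1 ▸ Finset.card_singleton g,
    hdiff2 ▸ Finset.card_singleton _, hlt⟩

end Step

/-- If `T` and `T'` are `r`-directed trees with `k` arcs in a finite digraph and `h` is
the number of arcs of `T` unfixed with respect to `T'`, then there is a reconfiguration
sequence from `T` to `T'` of length at most `h` consisting of `r`-directed trees with
`k` arcs. -/
theorem stmt6 {V : Type*} [Fintype V] [DecidableEq V] (A : Finset (V × V)) (r : V)
    (k : ℕ) (T T' : Finset (V × V))
    (hTA : T ⊆ A) (hT'A : T' ⊆ A) (hT : IsDirTree T r) (hT' : IsDirTree T' r)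
    (hkT : T.card = k) (hkT' : T'.card = k) :
    ∃ ℓ ≤ unfixedCount T T', ∃ f : ℕ → Finset (V × V), f 0 = T ∧ f ℓ = T' ∧
      (∀ i ≤ ℓ, f i ⊆ A ∧ IsDirTree (f i) r ∧ (f i).card = k) ∧
      (∀ i < ℓ, (f i \ f (i + 1)).card = 1 ∧ (f (i + 1) \ f i).card = 1) := by
  classical
  suffices H : ∀ n (T : Finset (V × V)), T ⊆ A → IsDirTree T r → T.card = k →
      unfixedCount T T' ≤ n →
      ∃ ℓ ≤ unfixedCount T T', ∃ f : ℕ → Finset (V × V), f 0 = T ∧ f ℓ = T' ∧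
        (∀ i ≤ ℓ, f i ⊆ A ∧ IsDirTree (f i) r ∧ (f i).card = k) ∧
        (∀ i < ℓ, (f i \ f (i + 1)).card = 1 ∧ (f (i + 1) \ f i).card = 1) by
    exact H (unfixedCount T T') T hTA hT hkT le_rfl
  intro n
  induction n with
  | zero =>
      intro T hTA hT hkT hcount
      have hTeq : T = T' := by
        have h0 : unfixedCount T T' = 0 := Nat.le_antisymm hcount (Nat.zero_le _)
        have hsub : T ⊆ T' := by
          intro e he
          by_contra heT'
          have hmem : e ∈ {e | e ∈ T ∧ ¬ FixedArc T T' e} :=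
            ⟨he, fun hfix => heT' (hfix e he .refl)⟩
          have hfin : {e | e ∈ T ∧ ¬ FixedArc T T' e}.Finite :=
            Set.Finite.subset T.finite_toSet (fun x hx => hx.1)
          have hpos : 0 < unfixedCount T T' := (Set.ncard_pos hfin).2 ⟨e, hmem⟩
          omega
        exact Finset.eq_of_subset_of_card_le hsub (by rw [hkT, hkT'])
      refine ⟨0, Nat.zero_le _, fun _ => T, rfl, hTeq, ?_, ?_⟩
      · intro i _
        exact ⟨hTA, hT, hkT⟩
      · intro i hi
        omega
  | succ n ih =>
      intro T hTA hT hkT hcount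
      by_cases hTeq : T = T'
      · refine ⟨0, Nat.zero_le _, fun _ => T, rfl, hTeq, ?_, ?_⟩
        · intro i _
          exact ⟨hTA, hT, hkT⟩
        · intro i hi
          omega
      · obtain ⟨T₁, hsub, hDT, hcard1, hd1, hd2, hlt⟩ :=
          step hT hT' (by rw [hkT, hkT']) hTeq
        have hT₁A : T₁ ⊆ A := hsub.trans (Finset.union_subset hTA hT'A)
        obtain ⟨ℓ, hℓ, f, hf0, hfl, hprops, hdiffs⟩ :=
          ih T₁ hT₁A hDT (hcard1.trans hkT) (by omega)
        refine ⟨ℓ + 1, by omega, fun i => if i = 0 then T else f (i - 1), by simp, ?_, ?_, ?_⟩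
        · simp only [Nat.succ_ne_zero, if_neg, Nat.add_sub_cancel]
          exact hfl
        · intro i hi
          rcases Nat.eq_zero_or_pos i with rfl | hip
          · simpa using ⟨hTA, hT, hkT⟩
          · have hne0 : i ≠ 0 := by omega
            simp only [hne0, if_false]
            exact hprops _ (by omega)
        · intro i hi
          rcases Nat.eq_zero_or_pos i with rfl | hip
          · simpa [hf0] using ⟨hd1, hd2⟩
          · have hne0 : i ≠ 0 := by omega
            have hne1 : i + 1 ≠ 0 := by omega
            simp only [hne0, hne1, if_false]
            have h' := hdiffs (i - 1) (by omega)
            have h1 : i - 1 + 1 = i := Nat.succ_pred_eq_of_pos hip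
            rw [h1] at h'
            have h2 : i + 1 - 1 = i := by omega
            rw [h2]
            exact h'
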